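/- Let k be a field of characteristic 2, G a finite group, and h a hermitian element of k[G]. Define the symmetric bilinear form q_h on k[G] by q_h(a, b) = δ(a·h·b*), where δ(x) denotes the coefficient of the identity element in x. Then q_h(x, s·x) = 0 for every x ∈ k[G] and every s ∈ G of order 2, if and only if δ_s(h) = 0 for every s ∈ G of order 2. -/

import Mathlib

/-- The canonical involution `x ↦ x*` of the group algebra `k[G]`, determined by
`g* = g⁻¹` for `g ∈ G`. -/
noncomputable def gStar {k G : Type*} [Semiring k] [Group G] (x : MonoidAlgebra k G) :
    MonoidAlgebra k G := MonoidAlgebra.ofCoeff (Finsupp.equivMapDomain (Equiv.inv G) x.coeff)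

lemma gStar_apply {k G : Type*} [Semiring k] [Group G] (x : MonoidAlgebra k G) (g : G) :
    (gStar x).coeff g = x.coeff g⁻¹ := rfl

lemma mul_apply_fintype {k G : Type*} [Semiring k] [Group G] [Fintype G]
    [DecidableEq G] (f g : MonoidAlgebra k G) (x : G) :
    (f * g).coeff x = ∑ a : G, f.coeff a * g.coeff (a⁻¹ * x) := by
  classical
  rw [MonoidAlgebra.coeff_mul_antidiag f g x
    (Finset.univ.map ⟨fun a => (a, a⁻¹ * x), fun a b hab => by
      simpa using congrArg Prod.fst hab⟩) ?_]
  · rw [Finset.sum_map]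
    rfl
  · intro p
    simp only [Finset.mem_map, Finset.mem_univ, Function.Embedding.coeFn_mk, true_and]
    constructor
    · rintro ⟨a, rfl⟩; exact mul_inv_cancel_left a x
    · rintro rfl
      exact ⟨p.1, Prod.ext rfl (inv_mul_cancel_left _ _)⟩

/-- Serre's proposition 7.6.6: let `k` be a field of characteristic 2, `G` a finite
group, and `h` a hermitian element of `k[G]`; let `q_h(a,b) = δ(a·h·b*)` be the
associated `G`-invariant symmetric bilinear form (`δ` = coefficient of `1`). Then
`q_h(x, s·x) = 0` for every `x ∈ k[G]` and every `s ∈ G` of order 2 if and only if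
`δ_s(h) = 0` for every `s ∈ G` of order 2. -/
theorem stmt_15 (k G : Type*) [Field k] [CharP k 2] [Group G] [Fintype G]
    (h : MonoidAlgebra k G) (hherm : gStar h = h) :
    (∀ s : G, orderOf s = 2 → ∀ x : MonoidAlgebra k G,
        (x * h * gStar (MonoidAlgebra.of k G s * x)).coeff 1 = 0) ↔
      ∀ s : G, orderOf s = 2 → h.coeff s = 0 := by
  classical
  have hsymm : ∀ g : G, h.coeff g⁻¹ = h.coeff g := fun g => by
    conv_rhs => rw [← hherm]
    rfl
  constructor
  · intro H s hs
    have := H s hs 1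
    have hss : s * s = 1 := by
      have := pow_orderOf_eq_one s
      rwa [hs, pow_two] at this
    have hsinv : s⁻¹ = s := by
      rw [inv_eq_iff_mul_eq_one, hss]
    rw [one_mul, mul_one] at this
    -- gStar (of s) = single s⁻¹ 1
    have hg : gStar (MonoidAlgebra.of k G s) = MonoidAlgebra.single s⁻¹ (1 : k) := by
      ext g
      rw [gStar_apply]
      simp [MonoidAlgebra.of_apply, MonoidAlgebra.coeff_single, Finsupp.single_apply, inv_eq_iff_eq_inv]
    rw [hg, MonoidAlgebra.coeff_mul_single_apply, hsinv] at this
    simpa [hsymm s] using this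
  · intro H s hs x
    have hss : s * s = 1 := by
      have := pow_orderOf_eq_one s
      rwa [hs, pow_two] at this
    have hsinv : s⁻¹ = s := by rw [inv_eq_iff_mul_eq_one, hss]
    have key : (x * h * gStar (MonoidAlgebra.of k G s * x)).coeff 1
        = ∑ a : G, ∑ b : G, x.coeff b * x.coeff (s * a) * h.coeff (b⁻¹ * a) := by
      rw [mul_apply_fintype]
      refine Finset.sum_congr rfl fun a _ => ?_
      rw [mul_apply_fintype]
      rw [Finset.sum_mul]
      refine Finset.sum_congr rfl fun b _ => ?_
      have : (gStar (MonoidAlgebra.of k G s * x)).coeff (a⁻¹ * 1) = x.coeff (s * a) := by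
        rw [mul_one, gStar_apply, inv_inv, MonoidAlgebra.of_apply,
          MonoidAlgebra.coeff_single_mul_apply, hsinv, one_mul]
      rw [this]
      ring
    -- reindex a ↦ s * a
    have key2 : (x * h * gStar (MonoidAlgebra.of k G s * x)).coeff 1
        = ∑ p : G × G, x.coeff p.1 * x.coeff p.2 * h.coeff (p.1⁻¹ * s * p.2) := by
      rw [key, ← Finset.sum_product', Finset.univ_product_univ]
      refine Finset.sum_nbij' (fun p => (p.2, s * p.1)) (fun p => (s⁻¹ * p.2, p.1))
        (by simp) (by simp) (by simp) (by simp [hsinv, ← mul_assoc, hss]) ?_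
      intro p _
      simp only
      rw [mul_assoc (p.2⁻¹) s, ← mul_assoc s s, hss, one_mul]
    rw [key2]
    -- split into diagonal and off-diagonal
    have hsplit : (Finset.univ : Finset (G × G)) =
        (Finset.univ : Finset G).diag ∪ (Finset.univ : Finset G).offDiag := by
      rw [Finset.diag_union_offDiag, Finset.univ_product_univ]
    rw [hsplit, Finset.sum_union (Finset.disjoint_diag_offDiag _)]
    have hdiag : ∑ p ∈ (Finset.univ : Finset G).diag,
        x.coeff p.1 * x.coeff p.2 * h.coeff (p.1⁻¹ * s * p.2) = 0 := by
      refine Finset.sum_eq_zero fun p hp => ?_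
      rw [Finset.mem_diag] at hp
      have horder : orderOf (p.1⁻¹ * s * p.1) = 2 := by
        have : SemiconjBy p.1⁻¹ s (p.1⁻¹ * s * p.1) := by
          unfold SemiconjBy
          group
        rw [← this.orderOf_eq p.1⁻¹, hs]
      rw [← hp.2, H _ horder, mul_zero]
    have hoff : ∑ p ∈ (Finset.univ : Finset G).offDiag,
        x.coeff p.1 * x.coeff p.2 * h.coeff (p.1⁻¹ * s * p.2) = 0 := by
      refine Finset.sum_involution (fun p _ => p.swap) ?_ ?_ ?_ ?_
      · intro p hp
        have hsw : h.coeff (p.2⁻¹ * s * p.1) = h.coeff (p.1⁻¹ * s * p.2) := by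
          rw [← hsymm (p.1⁻¹ * s * p.2)]
          congr 1
          rw [mul_inv_rev, mul_inv_rev, inv_inv, hsinv, mul_assoc]
        have heq : x.coeff p.swap.1 * x.coeff p.swap.2 * h.coeff (p.swap.1⁻¹ * s * p.swap.2)
            = x.coeff p.1 * x.coeff p.2 * h.coeff (p.1⁻¹ * s * p.2) := by
          simp only [Prod.fst_swap, Prod.snd_swap]
          rw [hsw]
          ring
        rw [heq, CharTwo.add_self_eq_zero]
      · intro p hp hne
        rw [Finset.mem_offDiag] at hp
        intro hcon
        exact hp.2.2 (congrArg Prod.fst hcon).symm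
      · intro p hp
        rw [Finset.mem_offDiag] at hp ⊢
        exact ⟨Finset.mem_univ _, Finset.mem_univ _, fun e => hp.2.2 e.symm⟩
      · intro p hp
        rfl
    rw [hdiag, hoff, add_zero]
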